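/- Let X ∈ ℝ^{n×d}, y ∈ ℝⁿ, β > 0, and let ℓ(·, y) : ℝⁿ → ℝ be convex. Let D_1, …, D_P be all distinct diagonal matrices of the form diag([Xu ≥ 0]) over u ∈ ℝ^d, and let D_{P+1}, …, D_{P̃} be any additional diagonal matrices with 0/1 diagonal entries (not necessarily of this form). Then the optimal value q̃* of the convex program inf over (v_i, w_i)_{i=1}^{P̃} of ℓ(∑_{i=1}^{P̃} D_i X (v_i − w_i), y) + β ∑_{i=1}^{P̃} (‖v_i‖₂ + ‖w_i‖₂), subject to (2D_i − I_n) X v_i ≥ 0 and (2D_i − I_n) X w_i ≥ 0 for all i ∈ [P̃], equals the optimal value q* of the same program formed with only D_1, …, D_P. -/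

import Mathlib

open Matrix

noncomputable section

namespace S7Aux

variable {n d : ℕ}

def nrm (x : Fin d → ℝ) : ℝ := Real.sqrt (∑ h, x h ^ 2)

lemma nrm_eq (x : Fin d → ℝ) : nrm x = ‖(WithLp.equiv 2 (Fin d → ℝ)).symm x‖ := by
  rw [EuclideanSpace.norm_eq]
  simp [nrm, Real.norm_eq_abs, sq_abs]

lemma nrm_zero : nrm (0 : Fin d → ℝ) = 0 := by simp [nrm]

lemma nrm_sum_le {ι : Type*} (s : Finset ι) (f : ι → Fin d → ℝ) :
    nrm (∑ i ∈ s, f i) ≤ ∑ i ∈ s, nrm (f i) := by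
  simp only [nrm_eq]
  have h := norm_sum_le (E := EuclideanSpace ℝ (Fin d)) s
    (fun i => (WithLp.equiv 2 (Fin d → ℝ)).symm (f i))
  have h2 : (WithLp.equiv 2 (Fin d → ℝ)).symm (∑ i ∈ s, f i)
      = ∑ i ∈ s, (WithLp.equiv 2 (Fin d → ℝ)).symm (f i) :=
    map_sum (WithLp.linearEquiv 2 ℝ (Fin d → ℝ)).symm f s
  rw [h2]; exact h

lemma entry (q z : Fin n → ℝ) (k : Fin n) :
    (((2 : ℝ) • Matrix.diagonal q - 1) *ᵥ z) k = (2 * q k - 1) * z k := by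
  have : ((2 : ℝ) • Matrix.diagonal q - 1) = Matrix.diagonal (fun k => 2 * q k - 1) := by
    rw [← Matrix.diagonal_one, ← Matrix.diagonal_smul, ← Matrix.diagonal_sub]
    congr 1
  rw [this, Matrix.mulVec_diagonal]

lemma diag_act (q : Fin n → ℝ) (hq : ∀ k, q k = 0 ∨ q k = 1)
    (z : Fin n → ℝ) (hz : ∀ k, 0 ≤ (((2:ℝ) • Matrix.diagonal q - 1) *ᵥ z) k) :
    Matrix.diagonal q *ᵥ z = Matrix.diagonal (fun k => if 0 ≤ z k then (1:ℝ) else 0) *ᵥ z := by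
  funext k
  rw [Matrix.mulVec_diagonal, Matrix.mulVec_diagonal]
  have h := hz k
  rw [entry] at h
  rcases hq k with h0 | h1
  · rw [h0] at h ⊢
    have hzk : z k ≤ 0 := by nlinarith
    rcases eq_or_lt_of_le hzk with he | hl
    · simp [he]
    · simp [not_le.mpr hl]
  · rw [h1] at h ⊢
    have hzk : 0 ≤ z k := by nlinarith
    simp [hzk]

lemma pat_feas (z : Fin n → ℝ) (k : Fin n) :
    0 ≤ (((2:ℝ) • Matrix.diagonal (fun k => if 0 ≤ z k then (1:ℝ) else 0) - 1) *ᵥ z) k := by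
  rw [entry]
  by_cases h : 0 ≤ z k
  · simp [h]
  · simp only [if_neg h]
    nlinarith [not_le.mp h]

lemma mulVec_sum' {m p : Type*} [Fintype p] (M : Matrix m p ℝ) {ι : Type*} (s : Finset ι)
    (g : ι → p → ℝ) : M *ᵥ (∑ i ∈ s, g i) = ∑ i ∈ s, M *ᵥ g i := by
  classical
  induction s using Finset.cons_induction with
  | empty => simp [Matrix.mulVec_zero]
  | cons a s ha ih => rw [Finset.sum_cons, Finset.sum_cons, Matrix.mulVec_add, ih]

lemma sum_extend {P Pt : ℕ} (hP : P ≤ Pt) {M : Type*} [AddCommMonoid M]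
    (f : Fin Pt → M) (hf : ∀ i : Fin Pt, ¬((i : ℕ) < P) → f i = 0) :
    ∑ i, f i = ∑ j : Fin P, f (Fin.castLE hP j) := by
  have h1 : ∑ i ∈ Finset.univ.map (Fin.castLEEmb hP), f i = ∑ j : Fin P, f (Fin.castLE hP j) := by
    rw [Finset.sum_map]; rfl
  rw [← h1]
  refine (Finset.sum_subset (Finset.subset_univ _) ?_).symm
  intro i _ hi
  apply hf
  intro hlt
  exact hi (Finset.mem_map.mpr ⟨⟨i, hlt⟩, Finset.mem_univ _, Fin.ext rfl⟩)

lemma fold {n d P Pt : ℕ} (hP : P ≤ Pt) (X : Matrix (Fin n) (Fin d) ℝ)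
    (D : Fin Pt → Matrix (Fin n) (Fin n) ℝ)
    (hDall : ∀ u : Fin d → ℝ, ∃ i : Fin P,
      D (Fin.castLE hP i) = Matrix.diagonal (fun k => if 0 ≤ (X *ᵥ u) k then (1 : ℝ) else 0))
    (hDdiag : ∀ i : Fin Pt, ∃ q : Fin n → ℝ,
      (∀ k, q k = 0 ∨ q k = 1) ∧ D i = Matrix.diagonal q)
    (u : Fin Pt → Fin d → ℝ)
    (hu : ∀ i, ∀ k, 0 ≤ (((2 : ℝ) • D i - 1) *ᵥ (X *ᵥ u i)) k) :
    ∃ u' : Fin P → Fin d → ℝ,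
      (∀ j, ∀ k, 0 ≤ (((2 : ℝ) • D (Fin.castLE hP j) - 1) *ᵥ (X *ᵥ u' j)) k) ∧
      ∑ j, D (Fin.castLE hP j) *ᵥ (X *ᵥ u' j) = ∑ i, D i *ᵥ (X *ᵥ u i) ∧
      ∑ j, nrm (u' j) ≤ ∑ i, nrm (u i) := by
  classical
  choose φ hφ using fun i => hDall (u i)
  refine ⟨fun j => ∑ i, if φ i = j then u i else 0, ?_, ?_, ?_⟩
  · intro j k
    rw [mulVec_sum', mulVec_sum', Finset.sum_apply]
    apply Finset.sum_nonneg
    intro i _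
    by_cases h : φ i = j
    · rw [if_pos h, ← h, hφ i]
      exact pat_feas (X *ᵥ u i) k
    · rw [if_neg h]
      simp [Matrix.mulVec_zero]
  · calc ∑ j, D (Fin.castLE hP j) *ᵥ (X *ᵥ ∑ i, if φ i = j then u i else 0)
        = ∑ j, ∑ i, (if φ i = j then D (Fin.castLE hP j) *ᵥ (X *ᵥ u i) else 0) := by
          refine Finset.sum_congr rfl fun j _ => ?_
          rw [mulVec_sum', mulVec_sum']
          refine Finset.sum_congr rfl fun i _ => ?_
          split_ifs with h
          · rfl
          · simp [Matrix.mulVec_zero]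
      _ = ∑ i, ∑ j, (if φ i = j then D (Fin.castLE hP j) *ᵥ (X *ᵥ u i) else 0) :=
          Finset.sum_comm
      _ = ∑ i, D (Fin.castLE hP (φ i)) *ᵥ (X *ᵥ u i) := by
          refine Finset.sum_congr rfl fun i _ => ?_
          rw [Finset.sum_ite_eq]
          simp
      _ = ∑ i, D i *ᵥ (X *ᵥ u i) := by
          refine Finset.sum_congr rfl fun i _ => ?_
          obtain ⟨q, hq01, hqD⟩ := hDdiag i
          rw [hφ i, hqD]
          exact (diag_act q hq01 (X *ᵥ u i) (by rw [← hqD]; exact hu i)).symm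
  · calc ∑ j, nrm (∑ i, if φ i = j then u i else 0)
        ≤ ∑ j, ∑ i, nrm (if φ i = j then u i else 0) :=
          Finset.sum_le_sum fun j _ => nrm_sum_le _ _
      _ = ∑ i, ∑ j, nrm (if φ i = j then u i else 0) := Finset.sum_comm
      _ = ∑ i, nrm (u i) := by
          refine Finset.sum_congr rfl fun i _ => ?_
          have : ∀ j, nrm (if φ i = j then u i else 0)
              = (if φ i = j then nrm (u i) else 0) := by
            intro j; split_ifs <;> simp [nrm_zero]
          simp only [this]
          rw [Finset.sum_ite_eq]
          simp

end S7Aux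

/-- adding redundant 0/1 diagonal matrices (not necessarily realizable
activation patterns) to the convex program does not change its optimal value. -/
theorem statement_7 {n d P Pt : ℕ} (hP : P ≤ Pt)
    (X : Matrix (Fin n) (Fin d) ℝ) (y : Fin n → ℝ) (β : ℝ) (hβ : 0 < β)
    (ℓ : (Fin n → ℝ) → ℝ) (hℓ : ConvexOn ℝ Set.univ ℓ)
    (D : Fin Pt → Matrix (Fin n) (Fin n) ℝ)
    -- the first P matrices are exactly the distinct matrices diag([Xu ≥ 0]):
    (hDinj : ∀ i j : Fin P, D (Fin.castLE hP i) = D (Fin.castLE hP j) → i = j)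
    (hDform : ∀ i : Fin P, ∃ u : Fin d → ℝ,
      D (Fin.castLE hP i) = Matrix.diagonal (fun k => if 0 ≤ (X *ᵥ u) k then (1 : ℝ) else 0))
    (hDall : ∀ u : Fin d → ℝ, ∃ i : Fin P,
      D (Fin.castLE hP i) = Matrix.diagonal (fun k => if 0 ≤ (X *ᵥ u) k then (1 : ℝ) else 0))
    -- all matrices are diagonal with 0/1 diagonal entries:
    (hDdiag : ∀ i : Fin Pt, ∃ q : Fin n → ℝ,
      (∀ k, q k = 0 ∨ q k = 1) ∧ D i = Matrix.diagonal q) :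
    sInf {c : ℝ | ∃ v w : Fin Pt → Fin d → ℝ,
        (∀ i, ∀ k, 0 ≤ (((2 : ℝ) • D i - 1) *ᵥ (X *ᵥ v i)) k) ∧
        (∀ i, ∀ k, 0 ≤ (((2 : ℝ) • D i - 1) *ᵥ (X *ᵥ w i)) k) ∧
        c = ℓ (∑ i, D i *ᵥ (X *ᵥ (v i - w i))) +
          β * ∑ i, (Real.sqrt (∑ h, (v i h) ^ 2) + Real.sqrt (∑ h, (w i h) ^ 2))}
      = sInf {c : ℝ | ∃ v w : Fin P → Fin d → ℝ,
        (∀ i, ∀ k, 0 ≤ (((2 : ℝ) • D (Fin.castLE hP i) - 1) *ᵥ (X *ᵥ v i)) k) ∧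
        (∀ i, ∀ k, 0 ≤ (((2 : ℝ) • D (Fin.castLE hP i) - 1) *ᵥ (X *ᵥ w i)) k) ∧
        c = ℓ (∑ i, D (Fin.castLE hP i) *ᵥ (X *ᵥ (v i - w i))) +
          β * ∑ i, (Real.sqrt (∑ h, (v i h) ^ 2) + Real.sqrt (∑ h, (w i h) ^ 2))} := by
  classical
  set SB : Set ℝ := {c : ℝ | ∃ v w : Fin Pt → Fin d → ℝ,
        (∀ i, ∀ k, 0 ≤ (((2 : ℝ) • D i - 1) *ᵥ (X *ᵥ v i)) k) ∧
        (∀ i, ∀ k, 0 ≤ (((2 : ℝ) • D i - 1) *ᵥ (X *ᵥ w i)) k) ∧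
        c = ℓ (∑ i, D i *ᵥ (X *ᵥ (v i - w i))) +
          β * ∑ i, (Real.sqrt (∑ h, (v i h) ^ 2) + Real.sqrt (∑ h, (w i h) ^ 2))} with hSBdef
  set SS : Set ℝ := {c : ℝ | ∃ v w : Fin P → Fin d → ℝ,
        (∀ i, ∀ k, 0 ≤ (((2 : ℝ) • D (Fin.castLE hP i) - 1) *ᵥ (X *ᵥ v i)) k) ∧
        (∀ i, ∀ k, 0 ≤ (((2 : ℝ) • D (Fin.castLE hP i) - 1) *ᵥ (X *ᵥ w i)) k) ∧
        c = ℓ (∑ i, D (Fin.castLE hP i) *ᵥ (X *ᵥ (v i - w i))) +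
          β * ∑ i, (Real.sqrt (∑ h, (v i h) ^ 2) + Real.sqrt (∑ h, (w i h) ^ 2))} with hSSdef
  have hnr : ∀ x : Fin d → ℝ, Real.sqrt (∑ h, (x h) ^ 2) = S7Aux.nrm x := fun _ => rfl
  have hne : SB.Nonempty := by
    refine ⟨_, ⟨0, 0, fun i k => by simp [Matrix.mulVec_zero], fun i k => by
      simp [Matrix.mulVec_zero], rfl⟩⟩
  have hsub : SS ⊆ SB := by
    rintro c ⟨v, w, hv, hw, rfl⟩
    set V : Fin Pt → Fin d → ℝ := fun i => if h : (i : ℕ) < P then v ⟨i, h⟩ else 0 with hV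
    set W : Fin Pt → Fin d → ℝ := fun i => if h : (i : ℕ) < P then w ⟨i, h⟩ else 0 with hW
    have hVc : ∀ j : Fin P, V (Fin.castLE hP j) = v j := by
      intro j
      simp only [hV]
      rw [dif_pos (show ((Fin.castLE hP j : Fin Pt) : ℕ) < P from j.isLt)]
      rfl
    have hWc : ∀ j : Fin P, W (Fin.castLE hP j) = w j := by
      intro j
      simp only [hW]
      rw [dif_pos (show ((Fin.castLE hP j : Fin Pt) : ℕ) < P from j.isLt)]
      rfl
    refine ⟨V, W, ?_, ?_, ?_⟩
    · intro i k
      by_cases h : (i : ℕ) < P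
      · have : i = Fin.castLE hP ⟨i, h⟩ := Fin.ext rfl
        rw [this]
        rw [hVc ⟨i, h⟩]
        exact hv ⟨i, h⟩ k
      · simp only [hV, dif_neg h]
        simp [Matrix.mulVec_zero]
    · intro i k
      by_cases h : (i : ℕ) < P
      · have : i = Fin.castLE hP ⟨i, h⟩ := Fin.ext rfl
        rw [this, hWc ⟨i, h⟩]
        exact hw ⟨i, h⟩ k
      · simp only [hW, dif_neg h]
        simp [Matrix.mulVec_zero]
    · have h1 : ∑ i, D i *ᵥ (X *ᵥ (V i - W i))
          = ∑ j : Fin P, D (Fin.castLE hP j) *ᵥ (X *ᵥ (v j - w j)) := by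
        rw [S7Aux.sum_extend hP _ (fun i hi => by
          simp only [hV, hW, dif_neg hi]
          simp [Matrix.mulVec_zero])]
        refine Finset.sum_congr rfl fun j _ => ?_
        rw [hVc j, hWc j]
      have h2 : ∑ i, (Real.sqrt (∑ h, (V i h) ^ 2) + Real.sqrt (∑ h, (W i h) ^ 2))
          = ∑ j : Fin P, (Real.sqrt (∑ h, (v j h) ^ 2) + Real.sqrt (∑ h, (w j h) ^ 2)) := by
        rw [S7Aux.sum_extend hP _ (fun i hi => by
          simp only [hV, hW, dif_neg hi]
          simp)]
        refine Finset.sum_congr rfl fun j _ => ?_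
        rw [hVc j, hWc j]
      rw [h1, h2]
  have hfold : ∀ c ∈ SB, ∃ c' ∈ SS, c' ≤ c := by
    rintro c ⟨v, w, hv, hw, rfl⟩
    obtain ⟨v', hv', hvsum, hvnrm⟩ := S7Aux.fold hP X D hDall hDdiag v hv
    obtain ⟨w', hw', hwsum, hwnrm⟩ := S7Aux.fold hP X D hDall hDdiag w hw
    refine ⟨_, ⟨v', w', hv', hw', rfl⟩, ?_⟩
    have hpt : ∑ j, D (Fin.castLE hP j) *ᵥ (X *ᵥ (v' j - w' j))
        = ∑ i, D i *ᵥ (X *ᵥ (v i - w i)) := by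
      simp only [Matrix.mulVec_sub, Finset.sum_sub_distrib]
      rw [hvsum, hwsum]
    rw [hpt]
    have hnorm : ∑ j, (Real.sqrt (∑ h, (v' j h) ^ 2) + Real.sqrt (∑ h, (w' j h) ^ 2))
        ≤ ∑ i, (Real.sqrt (∑ h, (v i h) ^ 2) + Real.sqrt (∑ h, (w i h) ^ 2)) := by
      simp only [hnr]
      rw [Finset.sum_add_distrib, Finset.sum_add_distrib]
      exact add_le_add hvnrm hwnrm
    exact add_le_add_right (mul_le_mul_of_nonneg_left hnorm hβ.le) _
  have hneS : SS.Nonempty := by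
    obtain ⟨c, hc⟩ := hne
    obtain ⟨c', hc', _⟩ := hfold c hc
    exact ⟨c', hc'⟩
  by_cases hbdd : BddBelow SS
  · have hbddB : BddBelow SB := by
      obtain ⟨m, hm⟩ := hbdd
      refine ⟨m, fun c hc => ?_⟩
      obtain ⟨c', hc', hle⟩ := hfold c hc
      exact (hm hc').trans hle
    apply le_antisymm
    · exact csInf_le_csInf hbddB hneS hsub
    · refine le_csInf hne fun c hc => ?_
      obtain ⟨c', hc', hle⟩ := hfold c hc
      exact (csInf_le hbdd hc').trans hle
  · have hB : ¬ BddBelow SB := fun h => hbdd (h.mono hsub)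
    rw [Real.sInf_of_not_bddBelow hB, Real.sInf_of_not_bddBelow hbdd]
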